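/- Let H be a complex Hilbert space, Q ∈ B(H) an idempotent, and U ∈ B(H) a partial isometry (i.e. U U* U = U) satisfying U*UQ = QU*U. Then UQU* is an idempotent and m(UQU*) = U·m(Q)·U*. -/

import Mathlib

/- For an idempotent `Q` on a complex Hilbert space `H`, we define (in `B(H)`):
the orthogonal projection onto the closure of the range of an operator,
the range projection `P_{ran Q} = Q (Q + Q* - 1)⁻¹`,
`|Q*| = (Q Q*)^{1/2}`, its Moore-Penrose inverse
`|Q*|^† = (P_{ran Q} P_{ran Q*} P_{ran Q})^{1/2}`,
the matched projection `m(Q) = (1/2)(|Q*| + Q*) |Q*|^† (|Q*| + 1)⁻¹ (|Q*| + Q)`,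
and the supplementary projection `s(Q) = m(2 P_{ran Q} - Q)`. -/

noncomputable section

namespace QPP

variable {H : Type*} [NormedAddCommGroup H] [InnerProductSpace ℂ H] [CompleteSpace H]

/-- The orthogonal projection onto the closure of the range of `T`, as an element of `B(H)`. -/
def closRangeProj (T : H →L[ℂ] H) : H →L[ℂ] H :=
  letI K := (LinearMap.range (T : H →ₗ[ℂ] H)).topologicalClosure
  haveI : CompleteSpace K := (LinearMap.range (T : H →ₗ[ℂ] H)).isClosed_topologicalClosure.completeSpace_coe
  K.subtypeL ∘L K.orthogonalProjectionOnto

/-- The range projection `P_{ran Q} = Q (Q + Q* - 1)⁻¹` of an idempotent `Q`.  (For an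
idempotent `Q` the operator `Q + Q* - 1` is invertible, so `Ring.inverse` is its inverse.) -/
def rangeProj (Q : H →L[ℂ] H) : H →L[ℂ] H :=
  Q * Ring.inverse (Q + star Q - 1)

/-- `|Q*| = (Q Q*)^{1/2}`. -/
def absStar (Q : H →L[ℂ] H) : H →L[ℂ] H :=
  CFC.sqrt (Q * star Q)

/-- `|Q*|^† = (P_{ran Q} P_{ran Q*} P_{ran Q})^{1/2}`, the Moore-Penrose inverse of `|Q*|`. -/
def absStarPinv (Q : H →L[ℂ] H) : H →L[ℂ] H :=
  CFC.sqrt (rangeProj Q * rangeProj (star Q) * rangeProj Q)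

/-- The matched projection `m(Q) = (1/2)(|Q*| + Q*) |Q*|^† (|Q*| + 1)⁻¹ (|Q*| + Q)`. -/
def matchedProj (Q : H →L[ℂ] H) : H →L[ℂ] H :=
  (2 : ℂ)⁻¹ • ((absStar Q + star Q) * absStarPinv Q * Ring.inverse (absStar Q + 1)
      * (absStar Q + Q))

/-- The supplementary projection `s(Q) = m(2 P_{ran Q} - Q)`. -/
def suppProj (Q : H →L[ℂ] H) : H →L[ℂ] H :=
  matchedProj (2 * rangeProj Q - Q)

end QPP

variable {H : Type*} [NormedAddCommGroup H] [InnerProductSpace ℂ H] [CompleteSpace H]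

set_option maxHeartbeats 1000000
set_option synthInstance.maxHeartbeats 1000000
set_option linter.unusedSectionVars false


lemma ringInverse_eq {a b : H →L[ℂ] H} (h1 : a * b = 1) (h2 : b * a = 1) :
    Ring.inverse a = b := by
  have ha : IsUnit a := isUnit_iff_exists.mpr ⟨b, h1, h2⟩
  calc Ring.inverse a = Ring.inverse a * (a * b) := by rw [h1, mul_one]
    _ = (Ring.inverse a * a) * b := by rw [mul_assoc]
    _ = b := by rw [Ring.inverse_mul_cancel a ha, one_mul]

lemma commute_ringInverse {e a : H →L[ℂ] H} (h : Commute e a) (ha : IsUnit a) :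
    Commute e (Ring.inverse a) := by
  obtain ⟨u, rfl⟩ := ha
  rw [Ring.inverse_unit]
  exact h.units_inv_right

lemma commute_sqrt {e a : H →L[ℂ] H} (hes : star e = e) (he2 : e * e = e)
    (ha : 0 ≤ a) (h : Commute e a) : Commute e (CFC.sqrt a) := by
  set s := CFC.sqrt a with hs
  set v : H →L[ℂ] H := (2:ℂ) • e - 1 with hv
  have hv2 : v * v = 1 := by
    simp only [hv, sub_mul, mul_sub, smul_mul_assoc, mul_smul_comm, one_mul, mul_one, he2,
      smul_smul]
    module
  have hvs : star v = v := by
    simp [hv, star_smul, star_sub, star_one, hes, Complex.star_def, map_ofNat]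
  have hva : v * a = a * v := by
    simp only [hv, sub_mul, mul_sub, smul_mul_assoc, mul_smul_comm, h.eq, one_mul, mul_one]
  have hsnn : (0:H →L[ℂ] H) ≤ s := CFC.sqrt_nonneg a
  have hb : 0 ≤ v * s * v := by
    have := star_left_conjugate_nonneg hsnn v
    rwa [hvs] at this
  have hss : s * s = a := CFC.sqrt_mul_sqrt_self a ha
  have hbb : (v * s * v) * (v * s * v) = a := by
    have h1 : (v * s * v) * (v * s * v) = v * (s * (v * v) * s) * v := by noncomm_ring
    rw [h1, hv2, mul_one, hss]
    calc v * a * v = a * (v * v) := by rw [hva]; noncomm_ring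
      _ = a := by rw [hv2, mul_one]
  have key : s = v * s * v := by
    conv_lhs => rw [hs]
    exact CFC.sqrt_unique hbb hb
  have hv1 : v * s = s * v := by
    conv_lhs => rw [key]
    calc v * (v * s * v) = (v * v) * s * v := by noncomm_ring
      _ = s * v := by rw [hv2, one_mul]
  have h2 : (2:ℂ) • (e * s) = (2:ℂ) • (s * e) := by
    have hv1' := hv1
    simp only [hv, sub_mul, mul_sub, smul_mul_assoc, mul_smul_comm, one_mul, mul_one] at hv1'
    exact sub_left_inj.mp hv1'
  have := smul_right_injective (H →L[ℂ] H) (two_ne_zero (α := ℂ)) h2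
  exact this

/-- If `Q` is an idempotent and `U` is a partial isometry with `U* U Q = Q U* U`, then
`U Q U*` is an idempotent and `m(U Q U*) = U m(Q) U*`. -/
theorem matchedProj_conj_partialIsometry (Q U : H →L[ℂ] H)
    (hQ : IsIdempotentElem Q) (hU : U * star U * U = U)
    (hcomm : star U * U * Q = Q * (star U * U)) :
    IsIdempotentElem (U * Q * star U) ∧
      QPP.matchedProj (U * Q * star U) = U * QPP.matchedProj Q * star U := by
  set E : H →L[ℂ] H := star U * U with hEdef
  have hE2 : E * E = E := by
    rw [hEdef]
    calc (star U * U) * (star U * U) = star U * (U * star U * U) := by noncomm_ring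
      _ = star U * U := by rw [hU]
  have hEs : star E = E := by simp [hEdef, star_mul]
  have hUE : U * E = U := by rw [hEdef, ← mul_assoc, hU]
  have cQ : Commute E Q := hcomm
  have cQs : Commute E (star Q) := by
    have h := cQ.star_star
    rwa [hEs] at h
  have hmul : ∀ X Y : H →L[ℂ] H, Commute E X →
      (U * X * star U) * (U * Y * star U) = U * (X * Y) * star U := by
    intro X Y hX
    calc (U * X * star U) * (U * Y * star U) = U * (X * (star U * U)) * Y * star U := by
          noncomm_ring
      _ = U * (X * E) * Y * star U := by rw [← hEdef]
      _ = (U * E) * (X * Y) * star U := by rw [← hX.eq]; noncomm_ring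
      _ = U * (X * Y) * star U := by rw [hUE]
  have hidem : IsIdempotentElem (U * Q * star U) := by
    show (U * Q * star U) * (U * Q * star U) = U * Q * star U
    rw [hmul Q Q cQ, hQ.eq]
  refine ⟨hidem, ?_⟩
  have hQs2 : star Q * star Q = star Q := by rw [← star_mul, hQ.eq]
  set R : H →L[ℂ] H := Q + star Q - 1 with hRdef
  have hRs : star R = R := by
    rw [hRdef, star_sub, star_add, star_star, star_one]; abel
  have cR : Commute E R := (cQ.add_right cQs).sub_right (Commute.one_right E)
  have hRR : R * R = 1 + (Q - star Q) * star (Q - star Q) := by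
    rw [hRdef, star_sub, star_star]
    simp only [mul_sub, sub_mul, mul_add, add_mul, mul_one, one_mul, hQ.eq, hQs2]
    abel
  have hpos : (0 : H →L[ℂ] H) ≤ (Q - star Q) * star (Q - star Q) := mul_star_self_nonneg _
  have hRRu : IsUnit (R * R) := CStarAlgebra.isUnit_of_le 1
    (by rw [hRR]; exact le_add_of_nonneg_right hpos) isStrictlyPositive_one
  have hRu : IsUnit R := by
    have hcu : Commute R (Ring.inverse (R * R)) :=
      commute_ringInverse ((Commute.refl R).mul_right (Commute.refl R)) hRRu
    refine isUnit_iff_exists.mpr ⟨R * Ring.inverse (R * R), ?_, ?_⟩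
    · rw [← mul_assoc, Ring.mul_inverse_cancel _ hRRu]
    · calc (R * Ring.inverse (R * R)) * R = R * (Ring.inverse (R * R) * R) := by
            rw [mul_assoc]
        _ = R * (R * Ring.inverse (R * R)) := by rw [← hcu.eq]
        _ = (R * R) * Ring.inverse (R * R) := by rw [mul_assoc]
        _ = 1 := Ring.mul_inverse_cancel _ hRRu
  set Ri : H →L[ℂ] H := Ring.inverse R with hRidef
  have hRi1 : R * Ri = 1 := Ring.mul_inverse_cancel _ hRu
  have hRi2 : Ri * R = 1 := Ring.inverse_mul_cancel _ hRu
  have cRi : Commute E Ri := commute_ringInverse cR hRu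
  have hRis : star Ri = Ri := by
    have h2 : star Ri * R = 1 := by
      have := congrArg star hRi1
      rwa [star_mul, hRs, star_one] at this
    calc star Ri = star Ri * (R * Ri) := by rw [hRi1, mul_one]
      _ = (star Ri * R) * Ri := by rw [mul_assoc]
      _ = Ri := by rw [h2, one_mul]
  have hQR1 : Q * R = Q * star Q := by
    rw [hRdef]; simp only [mul_add, mul_sub, mul_one, hQ.eq]; abel
  have hQR2 : R * star Q = Q * star Q := by
    rw [hRdef]; simp only [add_mul, sub_mul, one_mul, hQs2]; abel
  have hQsR1 : star Q * R = star Q * Q := by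
    rw [hRdef]; simp only [mul_add, mul_sub, mul_one, hQs2]; abel
  have hQsR2 : R * Q = star Q * Q := by
    rw [hRdef]; simp only [add_mul, sub_mul, one_mul, hQ.eq]; abel
  have hQR : Q * R = R * star Q := hQR1.trans hQR2.symm
  have hQsR : star Q * R = R * Q := hQsR1.trans hQsR2.symm
  have hRiQ : Ri * Q = star Q * Ri := by
    calc Ri * Q = Ri * Q * (R * Ri) := by rw [hRi1, mul_one]
      _ = Ri * (Q * R) * Ri := by noncomm_ring
      _ = Ri * (R * star Q) * Ri := by rw [hQR]
      _ = (Ri * R) * (star Q * Ri) := by noncomm_ring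
      _ = star Q * Ri := by rw [hRi2, one_mul]
  have hRiQs : Ri * star Q = Q * Ri := by
    calc Ri * star Q = Ri * star Q * (R * Ri) := by rw [hRi1, mul_one]
      _ = Ri * (star Q * R) * Ri := by noncomm_ring
      _ = Ri * (R * Q) * Ri := by rw [hQsR]
      _ = (Ri * R) * (Q * Ri) := by noncomm_ring
      _ = Q * Ri := by rw [hRi2, one_mul]
  set P : H →L[ℂ] H := Q * Ri with hPdef
  set Pst : H →L[ℂ] H := star Q * Ri with hPstdef
  have hPs : star P = P := by
    rw [hPdef, star_mul, hRis]
    exact hRiQs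
  have hPsts : star Pst = Pst := by
    rw [hPstdef, star_mul, hRis, star_star]
    exact hRiQ
  have hPst2 : Pst * Pst = Pst := by
    rw [hPstdef]
    calc star Q * Ri * (star Q * Ri) = star Q * (Ri * star Q) * Ri := by noncomm_ring
      _ = star Q * (Q * Ri) * Ri := by rw [hRiQs]
      _ = (star Q * Q) * (Ri * Ri) := by noncomm_ring
      _ = (star Q * R) * (Ri * Ri) := by rw [hQsR1]
      _ = star Q * ((R * Ri) * Ri) := by noncomm_ring
      _ = star Q * Ri := by rw [hRi1, one_mul]
  have hBform : P * Pst * P = (P * Pst) * star (P * Pst) := by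
    rw [star_mul, hPsts, hPs]
    calc P * Pst * P = P * (Pst * Pst) * P := by rw [hPst2]
      _ = (P * Pst) * (Pst * P) := by noncomm_ring
  have hBpos : (0 : H →L[ℂ] H) ≤ P * Pst * P := by
    rw [hBform]; exact mul_star_self_nonneg _
  have cP : Commute E P := cQ.mul_right cRi
  have cPst : Commute E Pst := cQs.mul_right cRi
  have cB : Commute E (P * Pst * P) := (cP.mul_right cPst).mul_right cP
  have hQQs : (0 : H →L[ℂ] H) ≤ Q * star Q := mul_star_self_nonneg Q
  set T : H →L[ℂ] H := CFC.sqrt (Q * star Q) with hTdef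
  have hTnn : (0 : H →L[ℂ] H) ≤ T := CFC.sqrt_nonneg _
  have cT : Commute E T := commute_sqrt hEs hE2 hQQs (cQ.mul_right cQs)
  have hT1u : IsUnit (T + 1) := CStarAlgebra.isUnit_of_le 1
    (le_add_of_nonneg_left hTnn) isStrictlyPositive_one
  set J : H →L[ℂ] H := Ring.inverse (T + 1) with hJdef
  have hJ1 : (T + 1) * J = 1 := Ring.mul_inverse_cancel _ hT1u
  have cJ : Commute E J := commute_ringInverse (cT.add_right (Commute.one_right E)) hT1u
  have cTJ : Commute T J :=
    commute_ringInverse ((Commute.refl T).add_right (Commute.one_right T)) hT1u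
  set pinv : H →L[ℂ] H := CFC.sqrt (P * Pst * P) with hpinvdef
  have cpinv : Commute E pinv := commute_sqrt hEs hE2 hBpos cB
  have hsqrtconj : ∀ X : H →L[ℂ] H, 0 ≤ X → Commute E X →
      CFC.sqrt (U * X * star U) = U * CFC.sqrt X * star U := by
    intro X hX cX
    have cs : Commute E (CFC.sqrt X) := commute_sqrt hEs hE2 hX cX
    have hb : (0 : H →L[ℂ] H) ≤ U * CFC.sqrt X * star U := by
      have := star_left_conjugate_nonneg (CFC.sqrt_nonneg (a := X)) (star U)
      rwa [star_star] at this
    refine CFC.sqrt_unique ?_ hb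
    rw [hmul _ _ cs, CFC.sqrt_mul_sqrt_self X hX]
  have hQ's : star (U * Q * star U) = U * star Q * star U := by
    simp [star_mul, mul_assoc]
  have hconj1 : ∀ X Y : H →L[ℂ] H, Commute E X → X * Y = X + Y →
      (U * X * star U - 1) * (U * Y * star U - 1) = 1 := by
    intro X Y hX hXY
    calc (U * X * star U - 1) * (U * Y * star U - 1)
        = (U * X * star U) * (U * Y * star U) - U * X * star U - U * Y * star U + 1 := by
          noncomm_ring
      _ = U * (X + Y) * star U - U * X * star U - U * Y * star U + 1 := by
          rw [hmul _ _ hX, hXY]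
      _ = 1 := by rw [mul_add, add_mul]; abel
  have hsum1 : R + 1 = Q + star Q := by rw [hRdef]; abel
  have hXY : (Q + star Q) * (Ri + 1) = (Q + star Q) + (Ri + 1) := by
    rw [← hsum1]
    calc (R + 1) * (Ri + 1) = R * Ri + R + Ri + 1 := by noncomm_ring
      _ = (R + 1) + (Ri + 1) := by rw [hRi1]; abel
  have hYX : (Ri + 1) * (Q + star Q) = (Ri + 1) + (Q + star Q) := by
    rw [← hsum1]
    calc (Ri + 1) * (R + 1) = Ri * R + R + Ri + 1 := by noncomm_ring
      _ = (Ri + 1) + (R + 1) := by rw [hRi2]; abel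
  have cQQs : Commute E (Q + star Q) := cQ.add_right cQs
  have cRi1 : Commute E (Ri + 1) := cRi.add_right (Commute.one_right E)
  have hinvR' : Ring.inverse (U * Q * star U + star (U * Q * star U) - 1)
      = U * (Ri + 1) * star U - 1 := by
    rw [hQ's, show U * Q * star U + U * star Q * star U = U * (Q + star Q) * star U from by
      rw [mul_add, add_mul]]
    exact ringInverse_eq (hconj1 _ _ cQQs hXY) (hconj1 _ _ cRi1 hYX)
  have hrp : QPP.rangeProj (U * Q * star U) = U * P * star U := by
    show (U * Q * star U) * Ring.inverse (U * Q * star U + star (U * Q * star U) - 1)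
        = U * P * star U
    rw [hinvR']
    calc (U * Q * star U) * (U * (Ri + 1) * star U - 1)
        = (U * Q * star U) * (U * (Ri + 1) * star U) - U * Q * star U := by noncomm_ring
      _ = U * (Q * (Ri + 1)) * star U - U * Q * star U := by rw [hmul _ _ cQ]
      _ = U * (Q * Ri) * star U := by
          rw [mul_add, mul_one, mul_add U, add_mul]; abel
      _ = U * P * star U := by rw [hPdef]
  have hrpst : QPP.rangeProj (star (U * Q * star U)) = U * Pst * star U := by
    show star (U * Q * star U) *
        Ring.inverse (star (U * Q * star U) + star (star (U * Q * star U)) - 1)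
        = U * Pst * star U
    rw [star_star, show star (U * Q * star U) + U * Q * star U - 1
        = U * Q * star U + star (U * Q * star U) - 1 from by abel, hinvR', hQ's]
    calc (U * star Q * star U) * (U * (Ri + 1) * star U - 1)
        = (U * star Q * star U) * (U * (Ri + 1) * star U) - U * star Q * star U := by
          noncomm_ring
      _ = U * (star Q * (Ri + 1)) * star U - U * star Q * star U := by rw [hmul _ _ cQs]
      _ = U * (star Q * Ri) * star U := by
          rw [mul_add, mul_one, mul_add U, add_mul]; abel
      _ = U * Pst * star U := by rw [hPstdef]
  have habs : QPP.absStar (U * Q * star U) = U * T * star U := by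
    show CFC.sqrt ((U * Q * star U) * star (U * Q * star U)) = U * T * star U
    rw [hQ's, hmul _ _ cQ, hsqrtconj _ hQQs (cQ.mul_right cQs), hTdef]
  have hpinv : QPP.absStarPinv (U * Q * star U) = U * pinv * star U := by
    show CFC.sqrt (QPP.rangeProj (U * Q * star U) * QPP.rangeProj (star (U * Q * star U)) *
        QPP.rangeProj (U * Q * star U)) = U * pinv * star U
    rw [hrp, hrpst, hmul _ _ cP, hmul _ _ (cP.mul_right cPst), hsqrtconj _ hBpos cB, hpinvdef]
  have hTid : T * (T * J) = T - T * J := by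
    have h0 : T * ((T + 1) * J) = T := by rw [hJ1, mul_one]
    rw [add_mul, one_mul, mul_add] at h0
    exact eq_sub_of_add_eq h0
  have hTid2 : (T * J) * T = T - T * J := by
    rw [mul_assoc, ← cTJ.eq, hTid]
  have hinvT' : Ring.inverse (U * T * star U + 1) = 1 - U * (T * J) * star U := by
    refine ringInverse_eq ?_ ?_
    · calc (U * T * star U + 1) * (1 - U * (T * J) * star U)
          = U * T * star U - (U * T * star U) * (U * (T * J) * star U)
            - U * (T * J) * star U + 1 := by noncomm_ring
        _ = U * T * star U - U * (T * (T * J)) * star U - U * (T * J) * star U + 1 := by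
            rw [hmul _ _ cT]
        _ = 1 := by rw [hTid, mul_sub U, sub_mul]; abel
    · calc (1 - U * (T * J) * star U) * (U * T * star U + 1)
          = U * T * star U - (U * (T * J) * star U) * (U * T * star U)
            - U * (T * J) * star U + 1 := by noncomm_ring
        _ = U * T * star U - U * ((T * J) * T) * star U - U * (T * J) * star U + 1 := by
            rw [hmul _ _ (cT.mul_right cJ)]
        _ = 1 := by rw [hTid2, mul_sub U, sub_mul]; abel
  have hJid : 1 - T * J = J := by
    have h := hJ1
    rw [add_mul, one_mul] at h
    rw [← h]; abel
  have hrpQ : QPP.rangeProj Q = P := by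
    show Q * Ring.inverse (Q + star Q - 1) = P
    rw [← hRdef, ← hRidef, hPdef]
  have hrpsQ : QPP.rangeProj (star Q) = Pst := by
    show star Q * Ring.inverse (star Q + star (star Q) - 1) = Pst
    rw [star_star, show star Q + Q - 1 = R from by rw [hRdef]; abel, ← hRidef, hPstdef]
  have habsQ : QPP.absStar Q = T := by
    show CFC.sqrt (Q * star Q) = T
    rw [hTdef]
  have hpinvQ : QPP.absStarPinv Q = pinv := by
    show CFC.sqrt (QPP.rangeProj Q * QPP.rangeProj (star Q) * QPP.rangeProj Q) = pinv
    rw [hrpQ, hrpsQ, hpinvdef]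
  have lhs0 : QPP.matchedProj (U * Q * star U)
      = (2:ℂ)⁻¹ • ((QPP.absStar (U * Q * star U) + star (U * Q * star U)) *
        QPP.absStarPinv (U * Q * star U) * Ring.inverse (QPP.absStar (U * Q * star U) + 1) *
        (QPP.absStar (U * Q * star U) + U * Q * star U)) := rfl
  have rhs0 : QPP.matchedProj Q = (2:ℂ)⁻¹ • ((T + star Q) * pinv * J * (T + Q)) := by
    show (2:ℂ)⁻¹ • ((QPP.absStar Q + star Q) * QPP.absStarPinv Q *
        Ring.inverse (QPP.absStar Q + 1) * (QPP.absStar Q + Q))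
        = (2:ℂ)⁻¹ • ((T + star Q) * pinv * J * (T + Q))
    rw [habsQ, hpinvQ, hJdef]
  rw [lhs0, rhs0, habs, hQ's, hpinv, hinvT']
  rw [mul_smul_comm, smul_mul_assoc]
  congr 1
  rw [show U * T * star U + U * star Q * star U = U * (T + star Q) * star U from by
        rw [mul_add, add_mul],
      show U * T * star U + U * Q * star U = U * (T + Q) * star U from by
        rw [mul_add, add_mul],
      hmul _ _ (cT.add_right cQs)]
  have hc3 : U * ((T + star Q) * pinv) * star U * (1 - U * (T * J) * star U)
      = U * ((T + star Q) * pinv * J) * star U := by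
    calc U * ((T + star Q) * pinv) * star U * (1 - U * (T * J) * star U)
        = U * ((T + star Q) * pinv) * star U
          - (U * ((T + star Q) * pinv) * star U) * (U * (T * J) * star U) := by noncomm_ring
      _ = U * ((T + star Q) * pinv) * star U
          - U * ((T + star Q) * pinv * (T * J)) * star U := by
          rw [hmul _ _ ((cT.add_right cQs).mul_right cpinv)]
      _ = U * ((T + star Q) * pinv * (1 - T * J)) * star U := by
          rw [mul_sub ((T + star Q) * pinv), mul_one, mul_sub U, sub_mul]
      _ = U * ((T + star Q) * pinv * J) * star U := by rw [hJid]
  rw [hc3, hmul _ _ (((cT.add_right cQs).mul_right cpinv).mul_right cJ)]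

end
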